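/- Let νᵢ⁺, νᵢ⁻ (i = 1,…,6) be the twelve unit vectors defined by ν₁⁺ = (√3/2,0,1/2), ν₂⁺ = (√3/2,0,−1/2), ν₁⁻ = ν₂⁺, ν₂⁻ = ν₁⁺, and νᵢ^± = R(ν_{i−2}^±) for i ≥ 3, where R is rotation by 2π/3 about the x₂-axis. Then the only subsets J ⊆ {1,…,6} containing 1 with Σ_{j∈J} νⱼ⁺ = 0 and Σ_{j∈J} νⱼ⁻ = 0 are J = {1,3,5} and J = {1,2,3,4,5,6}. -/
import Mathlib

open Real

set_option maxHeartbeats 1000000 in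
theorem stmt_14 (R : Matrix (Fin 3) (Fin 3) ℝ)
    (hR : R = !![Real.cos (2 * π / 3), 0, -Real.sin (2 * π / 3);
                 0, 1, 0;
                 Real.sin (2 * π / 3), 0, Real.cos (2 * π / 3)])
    (νp νm : Fin 6 → Fin 3 → ℝ)
    (hp1 : νp 0 = ![Real.sqrt 3 / 2, 0, 1 / 2])
    (hp2 : νp 1 = ![Real.sqrt 3 / 2, 0, -(1 / 2)])
    (hm1 : νm 0 = ![Real.sqrt 3 / 2, 0, -(1 / 2)])
    (hm2 : νm 1 = ![Real.sqrt 3 / 2, 0, 1 / 2])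
    (hp3 : νp 2 = R.mulVec (νp 0)) (hp4 : νp 3 = R.mulVec (νp 1))
    (hp5 : νp 4 = R.mulVec (νp 2)) (hp6 : νp 5 = R.mulVec (νp 3))
    (hm3 : νm 2 = R.mulVec (νm 0)) (hm4 : νm 3 = R.mulVec (νm 1))
    (hm5 : νm 4 = R.mulVec (νm 2)) (hm6 : νm 5 = R.mulVec (νm 3)) :
    ∀ J : Finset (Fin 6), 0 ∈ J →
      ((∑ j ∈ J, νp j = 0 ∧ ∑ j ∈ J, νm j = 0) ↔
        (J = {0, 2, 4} ∨ J = Finset.univ)) := by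
  have hs3 : Real.sqrt 3 * Real.sqrt 3 = 3 := Real.mul_self_sqrt (by norm_num)
  have hspos : (0:ℝ) < Real.sqrt 3 := Real.sqrt_pos.mpr (by norm_num)
  have hcos : Real.cos (2*π/3) = -(1/2) := by
    rw [show (2*π/3 : ℝ) = π - π/3 by ring, Real.cos_pi_sub, Real.cos_pi_div_three]
  have hsin : Real.sin (2*π/3) = Real.sqrt 3/2 := by
    rw [show (2*π/3 : ℝ) = π - π/3 by ring, Real.sin_pi_sub, Real.sin_pi_div_three]
  set s := Real.sqrt 3 with hsdef
  have hR' : R = !![-(1/2), 0, -(s/2); 0, 1, 0; s/2, 0, -(1/2)] := by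
    rw [hR, show (2 * π / 3 : ℝ) = 2*π/3 by ring, hcos, hsin]
  have hmul : ∀ a c : ℝ, R.mulVec ![a, 0, c] = ![-(1/2)*a - (s/2)*c, 0, (s/2)*a - (1/2)*c] := by
    intro a c
    rw [hR']
    funext i
    fin_cases i <;>
      simp [Matrix.mulVec, dotProduct, Fin.sum_univ_three] <;> ring
  have vp2 : νp 2 = ![-(s/2), 0, 1/2] := by
    rw [hp3, hp1, hmul]; funext i; fin_cases i <;> simp <;> nlinarith [hs3]
  have vp3 : νp 3 = ![0, 0, 1] := by
    rw [hp4, hp2, hmul]; funext i; fin_cases i <;> simp <;> nlinarith [hs3]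
  have vp4 : νp 4 = ![0, 0, -1] := by
    rw [hp5, vp2, hmul]; funext i; fin_cases i <;> simp <;> nlinarith [hs3]
  have vp5 : νp 5 = ![-(s/2), 0, -(1/2)] := by
    rw [hp6, vp3, hmul]; funext i; fin_cases i <;> simp <;> nlinarith [hs3]
  have vm2 : νm 2 = ![0, 0, 1] := by
    rw [hm3, hm1, hmul]; funext i; fin_cases i <;> simp <;> nlinarith [hs3]
  have vm3 : νm 3 = ![-(s/2), 0, 1/2] := by
    rw [hm4, hm2, hmul]; funext i; fin_cases i <;> simp <;> nlinarith [hs3]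
  have vm4 : νm 4 = ![-(s/2), 0, -(1/2)] := by
    rw [hm5, vm2, hmul]; funext i; fin_cases i <;> simp <;> nlinarith [hs3]
  have vm5 : νm 5 = ![0, 0, -1] := by
    rw [hm6, vm3, hmul]; funext i; fin_cases i <;> simp <;> nlinarith [hs3]
  intro J h0
  have hsum : ∀ (f : Fin 6 → Fin 3 → ℝ) (i : Fin 3),
      (∑ j ∈ J, f j) i = ∑ j : Fin 6, if j ∈ J then f j i else 0 := by
    intro f i
    rw [Finset.sum_apply, Finset.sum_ite_mem, Finset.univ_inter]
  constructor
  · rintro ⟨hP, hM⟩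
    have hP0 : ∑ j : Fin 6, (if j ∈ J then νp j 0 else 0) = 0 := by
      rw [← hsum, hP]; rfl
    have hP2 : ∑ j : Fin 6, (if j ∈ J then νp j 2 else 0) = 0 := by
      rw [← hsum, hP]; rfl
    have hM0 : ∑ j : Fin 6, (if j ∈ J then νm j 0 else 0) = 0 := by
      rw [← hsum, hM]; rfl
    have hM2 : ∑ j : Fin 6, (if j ∈ J then νm j 2 else 0) = 0 := by
      rw [← hsum, hM]; rfl
    rw [Fin.sum_univ_six] at hP0 hP2 hM0 hM2
    simp only [hp1, hp2, vp2, vp3, vp4, vp5, hm1, hm2, vm2, vm3, vm4, vm5] at hP0 hP2 hM0 hM2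
    norm_num [Matrix.cons_val_zero, Matrix.cons_val_one, Matrix.head_cons,
      Matrix.cons_val_two, Matrix.tail_cons] at hP0 hP2 hM0 hM2
    by_cases h1 : (1:Fin 6) ∈ J <;> by_cases h2 : (2:Fin 6) ∈ J <;>
      by_cases h3 : (3:Fin 6) ∈ J <;> by_cases h4 : (4:Fin 6) ∈ J <;>
      by_cases h5 : (5:Fin 6) ∈ J <;>
      simp only [h0, h1, h2, h3, h4, h5, if_true, if_false, ite_true, ite_false,
        if_pos, if_neg, not_false_iff] at hP0 hP2 hM0 hM2 <;>
      first
        | (left; ext j; fin_cases j <;> simp [h0, h1, h2, h3, h4, h5]; done)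
        | (right; ext j; fin_cases j <;> simp [h0, h1, h2, h3, h4, h5]; done)
        | (exfalso; linarith)
  · have e1 : ∀ f : Fin 6 → ℝ, ∑ j ∈ ({0,2,4} : Finset (Fin 6)), f j = f 0 + f 2 + f 4 := by
      intro f
      rw [Finset.sum_insert (by decide), Finset.sum_insert (by decide), Finset.sum_singleton,
        add_assoc]
    rintro (rfl | rfl)
    · refine ⟨?_, ?_⟩ <;> funext i <;>
        rw [Finset.sum_apply, e1] <;>
        fin_cases i <;>
        simp [hp1, vp2, vp4, hm1, vm2, vm4] <;> ring_nf <;> norm_num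
    · refine ⟨?_, ?_⟩ <;> funext i <;>
        rw [Finset.sum_apply, Fin.sum_univ_six] <;>
        fin_cases i <;>
        simp [hp1, hp2, vp2, vp3, vp4, vp5, hm1, hm2, vm2, vm3, vm4, vm5] <;>
        ring_nf <;> norm_num
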